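/- Let R be a commutative ring decomposed as a product R = ∏_{i∈Z/fZ} R_i with an endomorphism σ of R mapping R_{i} onto R_{i+1} (i.e. σ(a_{i-1}) = a_i for the corresponding ideals). Fix i. Then the category of pairs (N, φ) with N finite free over R and φ: σ*N ≅ N an isomorphism is equivalent to the category of pairs (N', ψ) with N' finite free over R_i and ψ: (σ^f)*N' ≅ N', via reduction N ↦ (N/a_i N, φ^f mod a_i). -/

import Mathlib

noncomputable section

/-- The matrix of `φ^f = φ ∘ σ*φ ∘ ... ∘ (σ*)^{f-1}φ` for a `σ`-shtuka with
matrix `C` (in coordinates): `C · σ(C) · ... · σ^{f-1}(C)`. -/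
def twistProd {R : Type} [CommRing R] (σ : R → R) (f : ℕ) {m : ℕ}
    (C : Matrix (Fin m) (Fin m) R) : Matrix (Fin m) (Fin m) R :=
  ((List.range f).map fun j => C.map σ^[j]).prod

section Aux
variable {R : Type} [CommRing R] {f : ℕ} {a : ZMod f → Ideal R} {σ : R →+* R}

lemma aux_mem (hσ : ∀ i : ZMod f, Ideal.comap σ (a (i + 1)) = a i) :
    ∀ (j : ℕ) (i : ZMod f) (x : R), (⇑σ)^[j] x ∈ a (i + j) ↔ x ∈ a i := by
  intro j
  induction j with
  | zero => intro i x; simp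
  | succ j ih =>
    intro i x
    have h1 : (i + ((j : ℕ) + 1 : ℕ) : ZMod f) = (i + j) + 1 := by push_cast; ring
    rw [h1, Function.iterate_succ_apply', ← Ideal.mem_comap, hσ (i + j)]
    exact ih i x

lemma aux_cong (hσ : ∀ i : ZMod f, Ideal.comap σ (a (i + 1)) = a i)
    (i : ZMod f) (x y : R)
    (h : Ideal.Quotient.mk (a i) x = Ideal.Quotient.mk (a i) y) :
    Ideal.Quotient.mk (a (i+1)) (σ x) = Ideal.Quotient.mk (a (i+1)) (σ y) := by
  rw [Ideal.Quotient.mk_eq_mk_iff_sub_mem] at h ⊢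
  rw [← map_sub, ← Ideal.mem_comap, hσ i]
  exact h

lemma aux_prod_head {M : Type} [Monoid M] (g : ℕ → M) (f : ℕ) (hf : 0 < f)
    (h : ∀ j : ℕ, 0 < j → j < f → g j = 1) :
    ((List.range f).map g).prod = g 0 := by
  obtain ⟨n, rfl⟩ : ∃ n, f = n + 1 := ⟨f - 1, by omega⟩
  rw [List.range_succ_eq_map, List.map_cons, List.prod_cons, List.map_map]
  rw [List.prod_eq_one, mul_one]
  intro x hx
  simp only [List.mem_map, List.mem_range] at hx
  obtain ⟨j, hj, rfl⟩ := hx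
  exact h (j+1) (Nat.succ_pos j) (by omega)

lemma aux_cancel {S : Type} [CommRing S] {p q : ℕ} {A B : Matrix (Fin p) (Fin q) S}
    {T : Matrix (Fin q) (Fin q) S} (hT : IsUnit T.det) (h : A * T = B * T) : A = B := by
  have h2 := congrArg (fun M => M * T⁻¹) h
  simpa [Matrix.mul_assoc, Matrix.mul_nonsing_inv T hT] using h2

lemma twistProd_succ {R : Type} [CommRing R] (σ : R →+* R) (j : ℕ) {m : ℕ}
    (C : Matrix (Fin m) (Fin m) R) :
    twistProd (⇑σ) (j+1) C = C * (twistProd (⇑σ) j C).map (⇑σ) := by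
  have hmap : (twistProd (⇑σ) j C).map (⇑σ)
      = ((List.range j).map fun i => (C.map (⇑σ)^[i]).map (⇑σ)).prod := by
    unfold twistProd
    rw [show ((List.range j).map fun i => C.map (⇑σ)^[i]).prod.map (⇑σ)
        = σ.mapMatrix (((List.range j).map fun i => C.map (⇑σ)^[i]).prod) from rfl,
      map_list_prod, List.map_map]
    rfl
  rw [hmap]
  unfold twistProd
  rw [List.range_succ_eq_map, List.map_cons, List.prod_cons, List.map_map]
  have h0 : C.map (⇑σ)^[0] = C := by simp
  rw [h0]
  congr 2
  apply List.map_congr_left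
  intro i _
  show C.map (⇑σ)^[i+1] = (C.map (⇑σ)^[i]).map (⇑σ)
  rw [Matrix.map_map, Function.iterate_succ' (⇑σ) i]

lemma twistProd_det_isUnit {R : Type} [CommRing R] (σ : R →+* R) (j : ℕ) {m : ℕ}
    (C : Matrix (Fin m) (Fin m) R) (hC : IsUnit C.det) :
    IsUnit (twistProd (⇑σ) j C).det := by
  induction j with
  | zero => simp [twistProd]
  | succ j ih =>
    rw [twistProd_succ, Matrix.det_mul]
    refine hC.mul ?_
    have : (twistProd (⇑σ) j C).map (⇑σ) = σ.mapMatrix (twistProd (⇑σ) j C) := rfl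
    rw [this, ← RingHom.map_det]
    exact ih.map σ

end Aux

/-- let `R = ∏_{i ∈ ℤ/fℤ} R_i` be a product decomposition of a
commutative ring (given by ideals `a i` with `R ≅ ∏ R/a i`) with an
endomorphism `σ` carrying the `i`-th factor onto the `(i+1)`-th
(`σ⁻¹(a_{i+1}) = a_i`).  Fix `i₀`.  Then reduction `(N,φ) ↦ (N/a_{i₀}N, φ^f)`
is an equivalence from pairs (finite free `R`-module, isomorphism `φ: σ*N ≅ N`)
— in coordinates: unit-determinant matrices over `R` — to pairs over
`R_{i₀} = R/a_{i₀}` with `σ^f`-semilinear isomorphisms: it is essentially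
surjective (up to isomorphism of shtukas) and fully faithful (morphisms
correspond uniquely). -/
theorem stmt16 {R : Type} [CommRing R] (f : ℕ) (hf : 0 < f)
    (a : ZMod f → Ideal R) (σ : R →+* R)
    (hdecomp : Function.Bijective
      (Pi.ringHom fun i : ZMod f => Ideal.Quotient.mk (a i)))
    (hσ : ∀ i : ZMod f, Ideal.comap σ (a (i + 1)) = a i)
    (i₀ : ZMod f)
    (σf : R ⧸ a i₀ →+* R ⧸ a i₀)
    (hσf : ∀ x : R, σf (Ideal.Quotient.mk (a i₀) x)
      = Ideal.Quotient.mk (a i₀) ((⇑σ)^[f] x)) :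
    -- essential surjectivity
    (∀ (m : ℕ) (D : Matrix (Fin m) (Fin m) (R ⧸ a i₀)), IsUnit D.det →
      ∃ C : Matrix (Fin m) (Fin m) R, IsUnit C.det ∧
        ∃ U : Matrix (Fin m) (Fin m) (R ⧸ a i₀), IsUnit U.det ∧
          U * D = (twistProd (⇑σ) f C).map (Ideal.Quotient.mk (a i₀)) * U.map (⇑σf)) ∧
    -- full faithfulness
    (∀ (m m' : ℕ) (C : Matrix (Fin m) (Fin m) R) (C' : Matrix (Fin m') (Fin m') R),
      IsUnit C.det → IsUnit C'.det →
      ∀ K : Matrix (Fin m') (Fin m) (R ⧸ a i₀),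
        K * (twistProd (⇑σ) f C).map (Ideal.Quotient.mk (a i₀))
          = (twistProd (⇑σ) f C').map (Ideal.Quotient.mk (a i₀)) * K.map (⇑σf) →
        ∃! H : Matrix (Fin m') (Fin m) R,
          H * C = C' * H.map (⇑σ) ∧ H.map (Ideal.Quotient.mk (a i₀)) = K) := by
  classical
  haveI : NeZero f := ⟨hf.ne'⟩
  -- basic consequences of the decomposition
  have hinj : ∀ x y : R,
      (∀ i, Ideal.Quotient.mk (a i) x = Ideal.Quotient.mk (a i) y) → x = y := by
    intro x y h
    apply hdecomp.injective
    funext i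
    exact h i
  have hsurjR : ∀ y : (∀ i, R ⧸ a i), ∃ x : R, ∀ i, Ideal.Quotient.mk (a i) x = y i := by
    intro y
    obtain ⟨x, hx⟩ := hdecomp.surjective y
    exact ⟨x, fun i => congrFun hx i⟩
  have hunit : ∀ x : R, (∀ i, IsUnit (Ideal.Quotient.mk (a i) x)) → IsUnit x := by
    intro x h
    choose u hu using fun i => (h i).exists_right_inv
    obtain ⟨z, hz⟩ := hsurjR u
    refine IsUnit.of_mul_eq_one (a := x) z (hinj _ _ fun i => ?_)
    rw [map_mul, hz, hu i, map_one]
  have hmat_inj : ∀ {p q : ℕ} (X Y : Matrix (Fin p) (Fin q) R),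
      (∀ i, X.map (Ideal.Quotient.mk (a i)) = Y.map (Ideal.Quotient.mk (a i))) → X = Y := by
    intro p q X Y h
    ext k l
    refine hinj _ _ fun i => ?_
    have := congrFun (congrFun (h i) k) l
    simpa [Matrix.map_apply] using this
  have hdet_mk : ∀ {p : ℕ} (i : ZMod f) (M : Matrix (Fin p) (Fin p) R),
      Ideal.Quotient.mk (a i) M.det = (M.map (Ideal.Quotient.mk (a i))).det := by
    intro p i M
    exact RingHom.map_det (Ideal.Quotient.mk (a i)) M
  constructor
  -- PART 1: essential surjectivity
  · intro m D hD
    choose D0 hD0 using fun k l => Ideal.Quotient.mk_surjective (D k l)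
    set E : Matrix (Fin m) (Fin m) R := Matrix.of D0 with hE
    choose Cfun hCfun using fun k l => hsurjR
      (fun i => Ideal.Quotient.mk (a i)
        (if i = i₀ then E k l else (1 : Matrix (Fin m) (Fin m) R) k l))
    set C : Matrix (Fin m) (Fin m) R := Matrix.of Cfun with hC
    have hCi0 : C.map (Ideal.Quotient.mk (a i₀)) = D := by
      ext k l
      have := hCfun k l i₀
      simp only [if_pos rfl] at this
      simp only [Matrix.map_apply, hC, Matrix.of_apply, this, hE]
      exact hD0 k l
    have hCne : ∀ i, i ≠ i₀ → C.map (Ideal.Quotient.mk (a i))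
        = (1 : Matrix (Fin m) (Fin m) R).map (Ideal.Quotient.mk (a i)) := by
      intro i hi
      ext k l
      have := hCfun k l i
      simp only [if_neg hi] at this
      simp only [Matrix.map_apply, hC, Matrix.of_apply, this]
    have hmap1 : ∀ i, (1 : Matrix (Fin m) (Fin m) R).map (Ideal.Quotient.mk (a i))
        = (1 : Matrix (Fin m) (Fin m) (R ⧸ a i)) :=
      fun i => Matrix.map_one _ (map_zero _) (map_one _)
    have hCdet : IsUnit C.det := by
      apply hunit
      intro i
      rw [hdet_mk]
      by_cases hi : i = i₀
      · subst hi; rw [hCi0]; exact hD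
      · rw [hCne i hi, hmap1]; simp
    -- reduction of the twisted product
    have hfac : ∀ j : ℕ, 0 < j → j < f →
        (C.map (⇑σ)^[j]).map (Ideal.Quotient.mk (a i₀)) = 1 := by
      intro j hj0 hjf
      have hne : i₀ - (j : ZMod f) ≠ i₀ := by
        intro h
        have h0 : ((j : ℕ) : ZMod f) = 0 := sub_eq_self.mp h
        rw [ZMod.natCast_eq_zero_iff] at h0
        have := Nat.le_of_dvd hj0 h0
        omega
      have hC1 := hCne _ hne
      ext k l
      simp only [Matrix.map_apply]
      have hmem0 : C k l - (1 : Matrix (Fin m) (Fin m) R) k l ∈ a (i₀ - j) := by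
        rw [← Ideal.Quotient.mk_eq_mk_iff_sub_mem]
        have := congrFun (congrFun hC1 k) l
        simpa [Matrix.map_apply] using this
      have hmem1 : (⇑σ)^[j] (C k l - (1 : Matrix (Fin m) (Fin m) R) k l) ∈ a i₀ := by
        have := (aux_mem hσ j (i₀ - j) _).mpr hmem0
        rwa [sub_add_cancel] at this
      have hmem2 : (⇑σ)^[j] (C k l) - (⇑σ)^[j] ((1 : Matrix (Fin m) (Fin m) R) k l)
          ∈ a i₀ := by
        rw [← RingHom.coe_pow] at hmem1 ⊢
        rwa [map_sub] at hmem1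
      have heq : Ideal.Quotient.mk (a i₀) ((⇑σ)^[j] (C k l))
          = Ideal.Quotient.mk (a i₀) ((⇑σ)^[j] ((1 : Matrix (Fin m) (Fin m) R) k l)) :=
        (Ideal.Quotient.mk_eq_mk_iff_sub_mem _ _).mpr hmem2
      rw [heq]
      by_cases hkl : k = l
      · subst hkl
        simp [Matrix.one_apply, ← RingHom.coe_pow]
      · simp [Matrix.one_apply, hkl, ← RingHom.coe_pow]
    have htwist : (twistProd (⇑σ) f C).map (Ideal.Quotient.mk (a i₀)) = D := by
      have hmapprod : (twistProd (⇑σ) f C).map (Ideal.Quotient.mk (a i₀))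
          = ((List.range f).map
              fun j => (C.map (⇑σ)^[j]).map (Ideal.Quotient.mk (a i₀))).prod := by
        unfold twistProd
        rw [show ((List.range f).map fun j => C.map (⇑σ)^[j]).prod.map
              (⇑(Ideal.Quotient.mk (a i₀)))
            = (Ideal.Quotient.mk (a i₀)).mapMatrix
              (((List.range f).map fun j => C.map (⇑σ)^[j]).prod) from rfl,
          map_list_prod, List.map_map]
        rfl
      rw [hmapprod, aux_prod_head _ f hf hfac]
      simpa using hCi0
    refine ⟨C, hCdet, 1, by simp, ?_⟩
    rw [htwist, Matrix.map_one _ (map_zero σf) (map_one σf), one_mul, mul_one]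
  -- PART 2: full faithfulness
  · intro m m' C C' hCdet hC'det K hK
    choose K0fun hK0f using fun k l => Ideal.Quotient.mk_surjective (K k l)
    set K0 : Matrix (Fin m') (Fin m) R := Matrix.of K0fun with hK0def
    have hK0mat : K0.map (Ideal.Quotient.mk (a i₀)) = K := by
      ext k l; simp only [Matrix.map_apply, hK0def, Matrix.of_apply]; exact hK0f k l
    set Hr : ℕ → Matrix (Fin m') (Fin m) R :=
      fun j => Nat.rec K0 (fun _ M => C' * M.map (⇑σ) * C⁻¹) j with hHrdef
    have hHr0 : Hr 0 = K0 := rfl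
    have hHrs : ∀ j, Hr (j+1) = C' * (Hr j).map (⇑σ) * C⁻¹ := fun _ => rfl
    have hHrC : ∀ j, Hr (j+1) * C = C' * (Hr j).map (⇑σ) := by
      intro j
      rw [hHrs, Matrix.mul_assoc, Matrix.nonsing_inv_mul C hCdet, Matrix.mul_one]
    have hstep' : ∀ (X Y : Matrix (Fin m') (Fin m) R) (i : ZMod f),
        X.map (Ideal.Quotient.mk (a i)) = Y.map (Ideal.Quotient.mk (a i)) →
        (X.map (⇑σ)).map (Ideal.Quotient.mk (a (i+1)))
          = (Y.map (⇑σ)).map (Ideal.Quotient.mk (a (i+1))) := by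
      intro X Y i h
      ext k l
      simp only [Matrix.map_apply]
      apply aux_cong hσ i
      have := congrFun (congrFun h k) l
      simpa [Matrix.map_apply] using this
    have hKey : ∀ j, Hr j * twistProd (⇑σ) j C
        = twistProd (⇑σ) j C' * K0.map (⇑σ)^[j] := by
      intro j
      induction j with
      | zero => simp [twistProd, hHr0]
      | succ j ih =>
        have lhs_eq : Hr (j+1) * twistProd (⇑σ) (j+1) C
            = C' * ((Hr j * twistProd (⇑σ) j C).map (⇑σ)) := by
          rw [twistProd_succ σ j C, ← Matrix.mul_assoc, hHrC j, Matrix.mul_assoc,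
            ← Matrix.map_mul]
        have rhs_eq : twistProd (⇑σ) (j+1) C' * K0.map (⇑σ)^[j+1]
            = C' * ((twistProd (⇑σ) j C' * K0.map (⇑σ)^[j]).map (⇑σ)) := by
          rw [twistProd_succ σ j C', Matrix.map_mul, Matrix.mul_assoc, Matrix.map_map,
            ← Function.iterate_succ' (⇑σ) j]
        rw [lhs_eq, rhs_eq, ih]
    -- the key reduction: (Hr f) reduces to K at i₀
    have hKσ : (K0.map (⇑σ)^[f]).map (Ideal.Quotient.mk (a i₀)) = K.map (⇑σf) := by
      ext k l
      simp only [Matrix.map_apply]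
      rw [← hσf, hK0def, Matrix.of_apply, hK0f k l]
    have hTu : IsUnit ((twistProd (⇑σ) f C).map (Ideal.Quotient.mk (a i₀))).det := by
      rw [← hdet_mk]
      exact (twistProd_det_isUnit σ f C hCdet).map _
    have hHrf : (Hr f).map (Ideal.Quotient.mk (a i₀)) = K := by
      have h1 := congrArg
        (fun M : Matrix (Fin m') (Fin m) R => M.map (Ideal.Quotient.mk (a i₀))) (hKey f)
      simp only [Matrix.map_mul] at h1
      rw [hKσ, ← hK] at h1
      exact aux_cancel hTu h1
    -- define H
    choose Hfun hHfun using fun k l => hsurjR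
      (fun i => Ideal.Quotient.mk (a i) (Hr ((i - i₀).val) k l))
    set H : Matrix (Fin m') (Fin m) R := Matrix.of Hfun with hHdef
    have hHcomp0 : ∀ i, H.map (Ideal.Quotient.mk (a i))
        = (Hr ((i - i₀).val)).map (Ideal.Quotient.mk (a i)) := by
      intro i
      ext k l
      simp only [Matrix.map_apply, hHdef, Matrix.of_apply]
      exact hHfun k l i
    -- periodicity
    have hper : ∀ j : ℕ, (Hr (j + f)).map (Ideal.Quotient.mk (a (i₀ + j)))
        = (Hr j).map (Ideal.Quotient.mk (a (i₀ + j))) := by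
      intro j
      induction j with
      | zero =>
        have e0 : (i₀ + ((0:ℕ) : ZMod f)) = i₀ := by simp
        rw [Nat.zero_add, e0, hHrf, hHr0, hK0mat]
      | succ j ih =>
        have h1 : j + 1 + f = (j + f) + 1 := by ring
        have h2 : (i₀ + ((j:ℕ) + 1 : ℕ) : ZMod f) = (i₀ + j) + 1 := by push_cast; ring
        rw [h1, h2, hHrs, hHrs]
        have h3 := hstep' _ _ _ ih
        simp only [Matrix.map_mul, h3]
    have hsub : ∀ (q r : ℕ), (Hr (r + q * f)).map (Ideal.Quotient.mk (a (i₀ + r)))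
        = (Hr r).map (Ideal.Quotient.mk (a (i₀ + r))) := by
      intro q
      induction q with
      | zero => intro r; simp
      | succ q ih =>
        intro r
        have h1 : r + (q + 1) * f = (r + q * f) + f := by ring
        have h2 := hper (r + q * f)
        have h3 : ((r + q * f : ℕ) : ZMod f) = (r : ZMod f) := by
          push_cast [ZMod.natCast_self]; ring
        rw [h3] at h2
        rw [h1, h2, ih r]
    have hcompN : ∀ j : ℕ, H.map (Ideal.Quotient.mk (a (i₀ + j)))
        = (Hr j).map (Ideal.Quotient.mk (a (i₀ + j))) := by
      intro j
      have hval : ((i₀ + (j:ℕ)) - i₀).val = j % f := by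
        rw [add_sub_cancel_left, ZMod.val_natCast]
      have hmod : (i₀ + ((j % f : ℕ) : ZMod f)) = (i₀ + (j : ℕ) : ZMod f) := by
        rw [ZMod.natCast_mod]
      rw [hHcomp0, hval]
      have h1 := hsub (j / f) (j % f)
      rw [hmod] at h1
      rw [show j % f + j / f * f = j from Nat.mod_add_div' j f] at h1
      exact h1.symm ▸ (by rw [← h1])
    -- H satisfies the equations
    have hHK : H.map (Ideal.Quotient.mk (a i₀)) = K := by
      have := hcompN 0
      have e0 : (i₀ + ((0:ℕ) : ZMod f)) = i₀ := by simp
      rw [e0] at this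
      rw [this, hHr0, hK0mat]
    have hHeq : H * C = C' * H.map (⇑σ) := by
      apply hmat_inj
      intro i
      set n : ℕ := ((i - 1) - i₀).val with hn
      have hn1 : (i₀ + (n : ℕ) : ZMod f) = i - 1 := by
        rw [hn, ZMod.natCast_rightInverse]; ring
      have hn2 : (i₀ + ((n + 1 : ℕ)) : ZMod f) = i := by
        push_cast
        rw [show ((n:ℕ) : ZMod f) + 1 = ((n:ℕ) : ZMod f) + 1 from rfl]
        rw [← add_assoc, hn1]
        ring
      have hHi : H.map (Ideal.Quotient.mk (a i)) = (Hr (n+1)).map (Ideal.Quotient.mk (a i)) := by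
        have := hcompN (n+1)
        rwa [hn2] at this
      have hHsig : (H.map (⇑σ)).map (Ideal.Quotient.mk (a i))
          = ((Hr n).map (⇑σ)).map (Ideal.Quotient.mk (a i)) := by
        have hbase : H.map (Ideal.Quotient.mk (a (i-1)))
            = (Hr n).map (Ideal.Quotient.mk (a (i-1))) := by
          have := hcompN n
          rwa [hn1] at this
        have := hstep' _ _ _ hbase
        rwa [sub_add_cancel] at this
      rw [Matrix.map_mul, Matrix.map_mul, hHi, hHsig, ← Matrix.map_mul, ← Matrix.map_mul,
        hHrC n]
    -- uniqueness
    refine ⟨H, ⟨hHeq, hHK⟩, ?_⟩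
    intro H' ⟨h1, h2⟩
    have hCu : ∀ i, IsUnit (C.map (Ideal.Quotient.mk (a i))).det := by
      intro i
      rw [← hdet_mk]
      exact hCdet.map _
    have hcomp' : ∀ j : ℕ, H'.map (Ideal.Quotient.mk (a (i₀ + j)))
        = (Hr j).map (Ideal.Quotient.mk (a (i₀ + j))) := by
      intro j
      induction j with
      | zero =>
        have e0 : (i₀ + ((0:ℕ) : ZMod f)) = i₀ := by simp
        rw [e0, h2, hHr0, hK0mat]
      | succ j ih =>
        have h3 : (i₀ + ((j:ℕ) + 1 : ℕ) : ZMod f) = (i₀ + j) + 1 := by push_cast; ring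
        rw [h3]
        have h4 := congrArg
          (fun M : Matrix (Fin m') (Fin m) R =>
            M.map (Ideal.Quotient.mk (a ((i₀ + j) + 1)))) h1
        simp only [Matrix.map_mul] at h4
        have h5 := hstep' _ _ _ ih
        rw [h5] at h4
        have h6 : C'.map (Ideal.Quotient.mk (a ((i₀ + j) + 1)))
              * ((Hr j).map (⇑σ)).map (Ideal.Quotient.mk (a ((i₀ + j) + 1)))
            = (Hr (j+1)).map (Ideal.Quotient.mk (a ((i₀ + j) + 1)))
              * C.map (Ideal.Quotient.mk (a ((i₀ + j) + 1))) := by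
          rw [← Matrix.map_mul, ← hHrC j, Matrix.map_mul]
        rw [h6] at h4
        exact aux_cancel (hCu ((i₀ + j) + 1)) h4
    apply hmat_inj
    intro i
    have hval : (i₀ + ((i - i₀).val : ℕ) : ZMod f) = i := by
      rw [ZMod.natCast_rightInverse]; ring
    have hA := hcomp' ((i - i₀).val)
    have hB := hcompN ((i - i₀).val)
    rw [hval] at hA hB
    rw [hA, ← hB]
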